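/- For the van der Corput function ψ, for any z₀ ∈ ℤ_{≥0}, k ∈ ℤ_{≥0}, and any 0 ≤ x < y < 1: | |{j ∈ [z₀, z₀+2^k) : ψ(j) ∈ [x,y)}| − 2^k·(y−x) | < 2. -/

import Mathlib

open Finset

/-- The van der Corput function `ψ`: binary digit reversal of the index.
(For `i ≥ 1` all binary digits of `i` have index `< i`, so summing over
`j < i` captures the full expansion; `ψ 0 = 0`.) -/
noncomputable def vdc (i : ℕ) : ℝ :=
  ∑ j ∈ Finset.range i, if i.testBit j then ((1 : ℝ) / 2) ^ (j + 1) else 0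

lemma vdc_eq_sum {i N : ℕ} (h : i ≤ N) :
    vdc i = ∑ t ∈ Finset.range N, if i.testBit t then ((1 : ℝ) / 2) ^ (t + 1) else 0 := by
  rw [vdc]
  apply Finset.sum_subset (Finset.range_subset_range.mpr h)
  intro t _ hti
  simp only [Finset.mem_range, not_lt] at hti
  rw [Nat.testBit_eq_false_of_lt (lt_of_le_of_lt hti (Nat.lt_two_pow_self (n := t)))]
  simp

lemma vdc_nonneg (i : ℕ) : 0 ≤ vdc i := by
  apply Finset.sum_nonneg
  intro t _
  split <;> positivity

lemma geom_half (n : ℕ) : ∑ t ∈ Finset.range n, ((1 : ℝ) / 2) ^ (t + 1) = 1 - (1 / 2) ^ n := by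
  induction n with
  | zero => simp
  | succ n ih => rw [Finset.sum_range_succ, ih]; ring

lemma vdc_lt_one (i : ℕ) : vdc i < 1 := by
  calc vdc i ≤ ∑ t ∈ Finset.range i, ((1 : ℝ) / 2) ^ (t + 1) := by
        apply Finset.sum_le_sum
        intro t _
        split
        · exact le_rfl
        · positivity
    _ = 1 - (1 / 2) ^ i := geom_half i
    _ < 1 := by
        have : (0:ℝ) < (1/2)^i := by positivity
        linarith

/-- bit reversal of the lowest `k` bits of `j`. -/
def lowk (k j : ℕ) : ℕ := ∑ t ∈ Finset.range k, if j.testBit t then 2 ^ (k - 1 - t) else 0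

lemma sum_pow_rev (k : ℕ) : ∑ t ∈ Finset.range k, 2 ^ (k - 1 - t) = 2 ^ k - 1 := by
  induction k with
  | zero => simp
  | succ k ih =>
    rw [Finset.sum_range_succ']
    have h3 : ∀ t ∈ Finset.range k, 2 ^ (k + 1 - 1 - (t + 1)) = 2 ^ (k - 1 - t) := by
      intro t _; congr 1; omega
    rw [Finset.sum_congr rfl h3, ih]
    have h4 : 1 ≤ 2 ^ k := Nat.one_le_two_pow
    have h5 : k + 1 - 1 - 0 = k := by omega
    rw [h5, pow_succ]
    omega

lemma lowk_lt (k j : ℕ) : lowk k j < 2 ^ k := by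
  have h1 : lowk k j ≤ ∑ t ∈ Finset.range k, 2 ^ (k - 1 - t) := by
    apply Finset.sum_le_sum
    intro t _
    split <;> simp
  have h2 := sum_pow_rev k
  have : 1 ≤ 2 ^ k := Nat.one_le_two_pow
  omega

lemma testBit_div_pow (j k s : ℕ) : (j / 2 ^ k).testBit s = j.testBit (k + s) := by
  induction k generalizing j with
  | zero => simp
  | succ k ih =>
    have h : j / 2 ^ (k + 1) = (j / 2) / 2 ^ k := by
      rw [Nat.div_div_eq_div_mul, pow_succ']
    rw [h, ih, ← Nat.testBit_succ]
    congr 1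
    omega

lemma vdc_split (k j : ℕ) :
    vdc j = (lowk k j : ℝ) / 2 ^ k + (1 / 2) ^ k * vdc (j / 2 ^ k) := by
  have hN : j ≤ k + j := Nat.le_add_left j k
  rw [vdc_eq_sum hN]
  have hsplit : ∑ t ∈ Finset.range (k + j), (if j.testBit t then ((1:ℝ)/2)^(t+1) else 0)
      = (∑ t ∈ Finset.Ico 0 k, (if j.testBit t then ((1:ℝ)/2)^(t+1) else 0))
      + ∑ t ∈ Finset.Ico k (k + j), (if j.testBit t then ((1:ℝ)/2)^(t+1) else 0) := by
    rw [Finset.sum_Ico_consecutive _ (Nat.zero_le k) (Nat.le_add_right k j)]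
    rw [Finset.range_eq_Ico]
  rw [hsplit]
  congr 1
  · -- low part
    rw [← Finset.range_eq_Ico, lowk, Nat.cast_sum, Finset.sum_div]
    apply Finset.sum_congr rfl
    intro t ht
    simp only [Finset.mem_range] at ht
    split
    · push_cast
      rw [div_pow, one_pow, div_eq_div_iff (by positivity) (by positivity)]
      rw [one_mul, ← pow_add]
      congr 1
      omega
    · simp
  · -- high part
    rw [Finset.sum_Ico_eq_sum_range]
    simp only [Nat.add_sub_cancel_left]
    rw [vdc_eq_sum (Nat.div_le_self j (2^k)), Finset.mul_sum]
    apply Finset.sum_congr rfl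
    intro s _
    rw [testBit_div_pow]
    split
    · rw [← pow_add]
      congr 1
      all_goals omega
    · simp

lemma lowk_succ (k j : ℕ) :
    lowk (k + 1) j = (if j.testBit 0 then 2 ^ k else 0) + lowk k (j / 2) := by
  rw [lowk, Finset.sum_range_succ']
  simp only [Nat.add_sub_cancel, Nat.sub_zero]
  rw [add_comm]
  congr 1
  apply Finset.sum_congr rfl
  intro t _
  rw [Nat.testBit_succ]
  congr 2
  omega

lemma lowk_inj (k : ℕ) : ∀ a < 2 ^ k, ∀ b < 2 ^ k, lowk k a = lowk k b → a = b := by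
  induction k with
  | zero => intro a ha b hb _; omega
  | succ k ih =>
    intro a ha b hb h
    rw [lowk_succ, lowk_succ] at h
    have hla := lowk_lt k (a / 2)
    have hlb := lowk_lt k (b / 2)
    have hbit : a.testBit 0 = b.testBit 0 := by
      by_contra hne
      rcases Bool.eq_false_or_eq_true (a.testBit 0) with h0 | h0 <;>
        rcases Bool.eq_false_or_eq_true (b.testBit 0) with h1 | h1 <;>
        simp [h0, h1] at hne h <;> omega
    rw [hbit] at h
    have heq : lowk k (a / 2) = lowk k (b / 2) := by
      split at h <;> omega
    have hda : a / 2 < 2 ^ k := by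
      rw [pow_succ] at ha; omega
    have hdb : b / 2 < 2 ^ k := by
      rw [pow_succ] at hb; omega
    have hdiv := ih _ hda _ hdb heq
    have hmod : a % 2 = b % 2 := by
      have := hbit
      rw [Nat.testBit_zero, Nat.testBit_zero] at this
      simp only [decide_eq_decide] at this
      omega
    omega

lemma lowk_mod (k j : ℕ) : lowk k (j % 2 ^ k) = lowk k j := by
  apply Finset.sum_congr rfl
  intro t ht
  simp only [Finset.mem_range] at ht
  rw [Nat.testBit_mod_two_pow]
  simp [ht]

lemma image_lowk (z₀ k : ℕ) :
    (Finset.Ico z₀ (z₀ + 2 ^ k)).image (lowk k) = Finset.range (2 ^ k) := by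
  have hinj : Set.InjOn (lowk k) (Finset.Ico z₀ (z₀ + 2 ^ k)) := by
    intro a ha b hb h
    simp only [Finset.coe_Ico, Set.mem_Ico] at ha hb
    rw [← lowk_mod k a, ← lowk_mod k b] at h
    have := lowk_inj k (a % 2 ^ k) (Nat.mod_lt _ (pow_pos two_pos k))
      (b % 2 ^ k) (Nat.mod_lt _ (pow_pos two_pos k)) h
    -- a ≡ b mod 2^k, both in window of length 2^k
    rcases le_total a b with hab | hab
    · have hdvd : 2 ^ k ∣ b - a := (Nat.modEq_iff_dvd' hab).mp this
      have : b - a < 2 ^ k := by omega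
      have := Nat.eq_zero_of_dvd_of_lt hdvd this
      omega
    · have hdvd : 2 ^ k ∣ a - b := (Nat.modEq_iff_dvd' hab).mp this.symm
      have : a - b < 2 ^ k := by omega
      have := Nat.eq_zero_of_dvd_of_lt hdvd this
      omega
  apply Finset.eq_of_subset_of_card_le
  · intro m hm
    simp only [Finset.mem_image] at hm
    obtain ⟨j, _, rfl⟩ := hm
    simpa using lowk_lt k j
  · rw [Finset.card_range, Finset.card_image_of_injOn hinj, Nat.card_Ico]
    omega

lemma card_filter_lowk (z₀ k : ℕ) (Q : ℕ → Prop) [DecidablePred Q] :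
    ((Finset.Ico z₀ (z₀ + 2 ^ k)).filter fun j => Q (lowk k j)).card
      = ((Finset.range (2 ^ k)).filter Q).card := by
  have hinj : Set.InjOn (lowk k)
      ((Finset.Ico z₀ (z₀ + 2 ^ k)).filter fun j => Q (lowk k j)) := by
    intro a ha b hb h
    have ha' : a ∈ Finset.Ico z₀ (z₀ + 2 ^ k) := Finset.mem_of_mem_filter _ ha
    have hb' : b ∈ Finset.Ico z₀ (z₀ + 2 ^ k) := Finset.mem_of_mem_filter _ hb
    have h1 : ((Finset.Ico z₀ (z₀ + 2 ^ k)).image (lowk k)).card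
        = (Finset.range (2 ^ k)).card := by rw [image_lowk]
    -- reuse injectivity derivation
    simp only [Finset.mem_Ico] at *
    have hm := h
    rw [← lowk_mod k a, ← lowk_mod k b] at hm
    have heq := lowk_inj k (a % 2 ^ k) (Nat.mod_lt _ (pow_pos two_pos k))
      (b % 2 ^ k) (Nat.mod_lt _ (pow_pos two_pos k)) hm
    simp only [Finset.coe_filter, Set.mem_setOf_eq, Finset.mem_Ico] at ha hb
    rcases le_total a b with hab | hab
    · have hdvd : 2 ^ k ∣ b - a := (Nat.modEq_iff_dvd' hab).mp heq
      have hlt : b - a < 2 ^ k := by omega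
      have := Nat.eq_zero_of_dvd_of_lt hdvd hlt
      omega
    · have hdvd : 2 ^ k ∣ a - b := (Nat.modEq_iff_dvd' hab).mp heq.symm
      have hlt : a - b < 2 ^ k := by omega
      have := Nat.eq_zero_of_dvd_of_lt hdvd hlt
      omega
  calc ((Finset.Ico z₀ (z₀ + 2 ^ k)).filter fun j => Q (lowk k j)).card
      = (((Finset.Ico z₀ (z₀ + 2 ^ k)).filter fun j => Q (lowk k j)).image (lowk k)).card := by
        rw [Finset.card_image_of_injOn hinj]
    _ = (((Finset.Ico z₀ (z₀ + 2 ^ k)).image (lowk k)).filter Q).card := by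
        rw [Finset.filter_image]
    _ = ((Finset.range (2 ^ k)).filter Q).card := by rw [image_lowk]

lemma count_Ico (n c₁ c₂ : ℕ) (h : c₂ ≤ n) :
    ((Finset.range n).filter fun m => c₁ ≤ m ∧ m < c₂).card = c₂ - c₁ := by
  have : ((Finset.range n).filter fun m => c₁ ≤ m ∧ m < c₂) = Finset.Ico c₁ c₂ := by
    ext m
    simp only [Finset.mem_filter, Finset.mem_range, Finset.mem_Ico]
    omega
  rw [this, Nat.card_Ico]

/-- `| |{j ∈ [z₀, z₀+2^k) : ψ(j) ∈ [x,y)}| − 2^k (y−x) | < 2`. -/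
theorem stmt_17 : ∀ (z₀ k : ℕ) (x y : ℝ), 0 ≤ x → x < y → y < 1 →
    |((((Finset.Ico z₀ (z₀ + 2 ^ k)).filter
        fun j => x ≤ vdc j ∧ vdc j < y).card : ℝ) - 2 ^ k * (y - x))| < 2 := by
  intro z₀ k x y hx hxy hy1
  classical
  set I := Finset.Ico z₀ (z₀ + 2 ^ k) with hI
  set A := I.filter fun j => x ≤ vdc j ∧ vdc j < y with hA
  have h2k : (0:ℝ) < 2 ^ k := by positivity
  -- key decomposition
  have hhalf : ((1:ℝ)/2)^k = 1 / 2 ^ k := by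
    rw [div_pow, one_pow]
  have hdec : ∀ j, vdc j = (lowk k j : ℝ) / 2 ^ k + 1 / 2 ^ k * vdc (j / 2 ^ k) := by
    intro j
    rw [vdc_split k j, hhalf]
  have hδ0 : ∀ j, 0 ≤ (1:ℝ) / 2 ^ k * vdc (j / 2 ^ k) := by
    intro j
    have := vdc_nonneg (j / 2 ^ k)
    positivity
  have hδ1 : ∀ j, (1:ℝ) / 2 ^ k * vdc (j / 2 ^ k) < 1 / 2 ^ k := by
    intro j
    have h := vdc_lt_one (j / 2 ^ k)
    have h0 : (0:ℝ) < 1 / 2 ^ k := by positivity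
    nlinarith
  -- sandwich sets
  set Q₁ : ℕ → Prop := fun m => x ≤ (m:ℝ) / 2 ^ k ∧ (m:ℝ) / 2 ^ k + 1 / 2 ^ k ≤ y with hQ₁
  set Q₂ : ℕ → Prop := fun m => x - 1 / 2 ^ k < (m:ℝ) / 2 ^ k ∧ (m:ℝ) / 2 ^ k < y with hQ₂
  have hB₁ : (I.filter fun j => Q₁ (lowk k j)) ⊆ A := by
    intro j hj
    simp only [Finset.mem_filter, hQ₁] at hj
    obtain ⟨hjI, h1, h2⟩ := hj
    simp only [hA, Finset.mem_filter]
    refine ⟨hjI, ?_, ?_⟩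
    · rw [hdec j]; have := hδ0 j; linarith
    · rw [hdec j]; have := hδ1 j; linarith
  have hB₂ : A ⊆ (I.filter fun j => Q₂ (lowk k j)) := by
    intro j hj
    simp only [hA, Finset.mem_filter] at hj
    obtain ⟨hjI, h1, h2⟩ := hj
    simp only [Finset.mem_filter, hQ₂]
    refine ⟨hjI, ?_, ?_⟩
    · rw [hdec j] at h1; have := hδ1 j; linarith
    · rw [hdec j] at h2; have := hδ0 j; linarith
  have hcard₁ : ((Finset.range (2 ^ k)).filter Q₁).card ≤ A.card :=
    le_trans (le_of_eq (card_filter_lowk z₀ k Q₁).symm) (Finset.card_le_card hB₁)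
  have hcard₂ : A.card ≤ ((Finset.range (2 ^ k)).filter Q₂).card :=
    le_trans (Finset.card_le_card hB₂) (le_of_eq (card_filter_lowk z₀ k Q₂))
  -- convert Q₁, Q₂ to integer bounds
  set c : ℕ := ⌈2 ^ k * x⌉₊ with hc
  set F : ℕ := ⌊2 ^ k * y⌋₊ with hF
  set U : ℕ := ⌈2 ^ k * y⌉₊ with hU
  have hx2 : (0:ℝ) ≤ 2 ^ k * x := mul_nonneg h2k.le hx
  have hy2 : (0:ℝ) ≤ 2 ^ k * y := mul_nonneg h2k.le (le_trans hx hxy.le)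
  have hcle : (2:ℝ) ^ k * x ≤ c := Nat.le_ceil _
  have hclt : (c:ℝ) < 2 ^ k * x + 1 := Nat.ceil_lt_add_one hx2
  have hFle : (F:ℝ) ≤ 2 ^ k * y := Nat.floor_le hy2
  have hFgt : (2:ℝ) ^ k * y - 1 < F := Nat.sub_one_lt_floor _
  have hUge : (2:ℝ) ^ k * y ≤ U := Nat.le_ceil _
  have hUlt : (U:ℝ) < 2 ^ k * y + 1 := Nat.ceil_lt_add_one hy2
  have hcU : c ≤ U := Nat.ceil_le_ceil (by nlinarith : (2:ℝ) ^ k * x ≤ 2 ^ k * y)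
  -- Q₁ count
  have hQ₁eq : ∀ m : ℕ, Q₁ m ↔ (c ≤ m ∧ m < F) := by
    intro m
    simp only [hQ₁]
    constructor
    · rintro ⟨h1, h2⟩
      constructor
      · rw [hc, Nat.ceil_le]
        rw [le_div_iff₀ h2k] at h1
        linarith
      · have h3 : ((m:ℝ) + 1) / 2 ^ k ≤ y := by
          rw [← add_div] at h2
          exact h2
        rw [div_le_iff₀ h2k] at h3
        have h4 : m + 1 ≤ F := by
          rw [hF, Nat.le_floor_iff hy2]
          push_cast
          linarith
        omega
    · rintro ⟨h1, h2⟩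
      constructor
      · rw [hc, Nat.ceil_le] at h1
        rw [le_div_iff₀ h2k]
        linarith
      · have h4 : m + 1 ≤ F := h2
        rw [hF, Nat.le_floor_iff hy2] at h4
        push_cast at h4
        rw [← add_div, div_le_iff₀ h2k]
        linarith
  have hFle2k : F ≤ 2 ^ k := by
    have : (F:ℝ) < ((2 ^ k : ℕ) : ℝ) := by push_cast; nlinarith
    exact_mod_cast this.le
  have hN₁ : ((Finset.range (2 ^ k)).filter Q₁).card = F - c := by
    rw [Finset.filter_congr (fun m _ => hQ₁eq m)]
    exact count_Ico (2 ^ k) c F hFle2k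
  -- Q₂ count upper bound
  have hN₂ : ((Finset.range (2 ^ k)).filter Q₂).card ≤ U - (c - 1) := by
    have hsub : (Finset.range (2 ^ k)).filter Q₂ ⊆ Finset.Ico (c - 1) U := by
      intro m hm
      simp only [Finset.mem_filter, Finset.mem_range, hQ₂] at hm
      obtain ⟨_, h1, h2⟩ := hm
      simp only [Finset.mem_Ico]
      constructor
      · have h3 : (2:ℝ) ^ k * x < (m:ℝ) + 1 := by
          rw [sub_lt_iff_lt_add, ← add_div, lt_div_iff₀ h2k] at h1
          linarith
        have h4 : c ≤ m + 1 := by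
          rw [hc, Nat.ceil_le]
          push_cast
          linarith
        omega
      · rw [hU, Nat.lt_ceil]
        rw [div_lt_iff₀ h2k] at h2
        linarith
    calc ((Finset.range (2 ^ k)).filter Q₂).card ≤ (Finset.Ico (c - 1) U).card :=
          Finset.card_le_card hsub
      _ = U - (c - 1) := Nat.card_Ico _ _
  -- combine
  rw [hN₁] at hcard₁
  have hlow : F ≤ A.card + c := by omega
  have hhigh : A.card + c ≤ U + 1 := by omega
  have hlowR : (F:ℝ) ≤ (A.card:ℝ) + c := by exact_mod_cast hlow
  have hhighR : (A.card:ℝ) + c ≤ (U:ℝ) + 1 := by exact_mod_cast hhigh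
  rw [abs_lt]
  constructor
  · linarith
  · linarith
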